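/- The vector (x₂, x₃, x₄) = ((2-√2)/2, √2 - 1, (2-√2)/2) satisfies x₂ + x₃ + x₄ = 1 and, for every p ∈ (0, 1/2), the fixed-point equations (1 - p + p·x₃)·x₂ = (1 - 2p)·x₂ + p·x₃ and (1 - p + p·x₃)·x₃ = p + (1 - 3p)·x₃ of the away-distribution map on the circle C₄; moreover it is the unique such probability vector with positive entries. -/
import Mathlib


theorem stmt_12 :
    ((2 - Real.sqrt 2) / 2 + (Real.sqrt 2 - 1) + (2 - Real.sqrt 2) / 2 = 1) ∧
    (∀ p : ℝ, p ∈ Set.Ioo (0 : ℝ) (1 / 2) →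
      (1 - p + p * (Real.sqrt 2 - 1)) * ((2 - Real.sqrt 2) / 2) =
        (1 - 2 * p) * ((2 - Real.sqrt 2) / 2) + p * (Real.sqrt 2 - 1) ∧
      (1 - p + p * (Real.sqrt 2 - 1)) * (Real.sqrt 2 - 1) =
        p + (1 - 3 * p) * (Real.sqrt 2 - 1)) ∧
    ∀ x₂ x₃ x₄ : ℝ, 0 < x₂ → 0 < x₃ → 0 < x₄ → x₂ + x₃ + x₄ = 1 →
      (∀ p : ℝ, p ∈ Set.Ioo (0 : ℝ) (1 / 2) →
        (1 - p + p * x₃) * x₂ = (1 - 2 * p) * x₂ + p * x₃ ∧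
        (1 - p + p * x₃) * x₃ = p + (1 - 3 * p) * x₃) →
      x₂ = (2 - Real.sqrt 2) / 2 ∧ x₃ = Real.sqrt 2 - 1 ∧ x₄ = (2 - Real.sqrt 2) / 2 := by
  have hs : Real.sqrt 2 ^ 2 = 2 := Real.sq_sqrt (by norm_num)
  have hs1 : (1 : ℝ) < Real.sqrt 2 := by
    nlinarith [Real.sqrt_nonneg 2]
  refine ⟨by ring, fun p hp => ⟨by linear_combination (-(p/2)) * hs, by linear_combination p * hs⟩, ?_⟩
  intro x₂ x₃ x₄ h2 h3 h4 hsum heq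
  obtain ⟨e1, e2⟩ := heq (1/4) (by norm_num)
  have h3' : x₃ = Real.sqrt 2 - 1 := by
    have hq : x₃ ^ 2 + 2 * x₃ - 1 = 0 := by nlinarith
    have : (x₃ - (Real.sqrt 2 - 1)) * (x₃ + (Real.sqrt 2 + 1)) = 0 := by nlinarith
    rcases mul_eq_zero.mp this with h | h
    · linarith
    · nlinarith
  subst h3'
  have h2' : x₂ = (2 - Real.sqrt 2) / 2 := by nlinarith
  exact ⟨h2', by rfl, by linarith⟩
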